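/- Let 𝕂 be a field and let G be a quotient of the group T, i.e. there exists a surjective group homomorphism T → G. Then every finite-dimensional absolutely simple 𝕂G-module has dimension at most four. -/

import Mathlib

open scoped TensorProduct

/-- The translations of the conjugation quandle of the conjugacy class of `(1 2 3)` in `A₄`,
written on `Fin 4` (0-indexed): `φ₁ = (2 4 3)`, `φ₂ = (1 3 4)`, `φ₃ = (1 4 2)`, `φ₄ = (1 2 3)`. -/
def phiA4 : Fin 4 → Fin 4 → Fin 4 :=
  ![![0, 3, 1, 2], ![2, 1, 3, 0], ![3, 0, 2, 1], ![1, 2, 0, 3]]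

/-- The defining relations of the group `⟨x₁,…,x₄ ∣ xᵢxⱼ = x_{φᵢ(j)}xᵢ⟩`. -/
def TRels : Set (FreeGroup (Fin 4)) :=
  {r | ∃ i j : Fin 4,
    r = FreeGroup.of i * FreeGroup.of j * (FreeGroup.of i)⁻¹ * (FreeGroup.of (phiA4 i j))⁻¹}

/-- The group `T = ⟨z⟩ × ⟨x₁,…,x₄ ∣ xᵢxⱼ = x_{φᵢ(j)}xᵢ⟩` with `⟨z⟩` infinite cyclic. -/
def TGroup : Type := Multiplicative ℤ × PresentedGroup TRels

instance : Group TGroup := inferInstanceAs (Group (Multiplicative ℤ × PresentedGroup TRels))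

/-- The base change of a representation along a field extension `K ⊆ L`. -/
noncomputable def repBaseChange {K : Type} [Field K] (L : Type) [Field L] [Algebra K L]
    {G : Type} [Group G] {V : Type} [AddCommGroup V] [Module K V]
    (ρ : Representation K G V) : Representation L G (L ⊗[K] V) where
  toFun g := LinearMap.baseChange L (ρ g)
  map_one' := by
    ext v
    simp
  map_mul' g h := by
    ext v
    simp

/-- A finite-dimensional representation is absolutely simple if all its base changes to
field extensions of `K` are simple. -/
def IsAbsolutelySimpleRep (K : Type) [Field K] (G : Type) [Group G]
    {V : Type} [AddCommGroup V] [Module K V] (ρ : Representation K G V) : Prop :=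
  ∀ (L : Type) [Field L] [Algebra K L],
    IsSimpleModule (MonoidAlgebra L G) (repBaseChange L ρ).asModule

namespace Stmt7Aux

abbrev P := PresentedGroup TRels

def e (i : Fin 4) : P := PresentedGroup.of i

lemma rel (i j : Fin 4) : e i * e j = e (phiA4 i j) * e i := by
  have hmem : (FreeGroup.of i * FreeGroup.of j * (FreeGroup.of i)⁻¹ *
      (FreeGroup.of (phiA4 i j))⁻¹) ∈ TRels := ⟨i, j, rfl⟩
  have h1 : (PresentedGroup.mk TRels) (FreeGroup.of i * FreeGroup.of j * (FreeGroup.of i)⁻¹ *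
      (FreeGroup.of (phiA4 i j))⁻¹) = 1 := by
    apply (QuotientGroup.eq_one_iff _).mpr
    exact Subgroup.subset_normalClosure hmem
  simp only [map_mul, map_inv] at h1
  have h2 : e i * e j * (e i)⁻¹ * (e (phiA4 i j))⁻¹ = 1 := h1
  calc e i * e j
      = (e i * e j * (e i)⁻¹ * (e (phiA4 i j))⁻¹) * (e (phiA4 i j) * e i) := by group
    _ = e (phiA4 i j) * e i := by rw [h2]; group

lemma r01 : e 0 * e 1 = e 3 * e 0 := rel 0 1
lemma r02 : e 0 * e 2 = e 1 * e 0 := rel 0 2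
lemma r03 : e 0 * e 3 = e 2 * e 0 := rel 0 3
lemma r12 : e 1 * e 2 = e 3 * e 1 := rel 1 2
lemma r13 : e 1 * e 3 = e 0 * e 1 := rel 1 3
lemma r20 : e 2 * e 0 = e 3 * e 2 := rel 2 0
lemma r31 : e 3 * e 1 = e 2 * e 3 := rel 3 1

/-- `a = x₂x₁⁻¹`. -/
def a : P := e 1 * (e 0)⁻¹
/-- `b = x₁⁻¹x₂`. -/
def b : P := (e 0)⁻¹ * e 1
/-- `c = x₄x₁⁻¹`. -/
def c : P := e 3 * (e 0)⁻¹

lemma i1 : (e 0)⁻¹ * e 1 * e 0 = e 2 := by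
  calc (e 0)⁻¹ * e 1 * e 0 = (e 0)⁻¹ * (e 1 * e 0) := by group
    _ = (e 0)⁻¹ * (e 0 * e 2) := by rw [r02]
    _ = e 2 := by group

lemma i2 : (e 0)⁻¹ * e 2 * e 0 = e 3 := by
  calc (e 0)⁻¹ * e 2 * e 0 = (e 0)⁻¹ * (e 2 * e 0) := by group
    _ = (e 0)⁻¹ * (e 0 * e 3) := by rw [r03]
    _ = e 3 := by group

lemma i3 : (e 0)⁻¹ * e 3 * e 0 = e 1 := by
  calc (e 0)⁻¹ * e 3 * e 0 = (e 0)⁻¹ * (e 3 * e 0) := by group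
    _ = (e 0)⁻¹ * (e 0 * e 1) := by rw [r01]
    _ = e 1 := by group

lemma hca : e 0 * a = c * e 0 := by
  unfold a c
  calc e 0 * (e 1 * (e 0)⁻¹) = (e 0 * e 1) * (e 0)⁻¹ := by group
    _ = (e 3 * e 0) * (e 0)⁻¹ := by rw [r01]
    _ = e 3 * (e 0)⁻¹ * e 0 := by group

lemma hab : a * b = c := by
  unfold a b c
  calc e 1 * (e 0)⁻¹ * ((e 0)⁻¹ * e 1)
      = e 1 * ((e 0)⁻¹ * ((e 0)⁻¹ * e 1 * e 0) * e 0) * ((e 0)⁻¹ * (e 0)⁻¹) := by group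
    _ = e 1 * ((e 0)⁻¹ * e 2 * e 0) * ((e 0)⁻¹ * (e 0)⁻¹) := by rw [i1]
    _ = e 1 * e 3 * ((e 0)⁻¹ * (e 0)⁻¹) := by rw [i2]
    _ = e 0 * e 1 * ((e 0)⁻¹ * (e 0)⁻¹) := by rw [r13]
    _ = (e 0 * e 1) * ((e 0)⁻¹ * (e 0)⁻¹) := by group
    _ = (e 3 * e 0) * ((e 0)⁻¹ * (e 0)⁻¹) := by rw [r01]
    _ = e 3 * (e 0)⁻¹ := by group

lemma haa : a * a = e 3 * e 1 * ((e 0)⁻¹ * (e 0)⁻¹) := by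
  unfold a
  calc e 1 * (e 0)⁻¹ * (e 1 * (e 0)⁻¹)
      = e 1 * ((e 0)⁻¹ * e 1 * e 0) * ((e 0)⁻¹ * (e 0)⁻¹) := by group
    _ = e 1 * e 2 * ((e 0)⁻¹ * (e 0)⁻¹) := by rw [i1]
    _ = (e 1 * e 2) * ((e 0)⁻¹ * (e 0)⁻¹) := by group
    _ = (e 3 * e 1) * ((e 0)⁻¹ * (e 0)⁻¹) := by rw [r12]
    _ = e 3 * e 1 * ((e 0)⁻¹ * (e 0)⁻¹) := by group

lemma hcc : c * c = a * a := by
  rw [haa]; unfold c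
  calc e 3 * (e 0)⁻¹ * (e 3 * (e 0)⁻¹)
      = e 3 * ((e 0)⁻¹ * e 3 * e 0) * ((e 0)⁻¹ * (e 0)⁻¹) := by group
    _ = e 3 * e 1 * ((e 0)⁻¹ * (e 0)⁻¹) := by rw [i3]

lemma hzeta_e0 : (a * a) * e 0 = e 0 * (a * a) := by
  calc (a * a) * e 0 = (c * c) * e 0 := by rw [hcc]
    _ = c * (c * e 0) := by group
    _ = c * (e 0 * a) := by rw [hca]
    _ = (c * e 0) * a := by group
    _ = (e 0 * a) * a := by rw [hca]
    _ = e 0 * (a * a) := by group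

lemma hzeta_e0' : (a * a) * (e 0)⁻¹ = (e 0)⁻¹ * (a * a) := by
  calc (a * a) * (e 0)⁻¹ = (e 0)⁻¹ * (e 0 * (a * a)) * (e 0)⁻¹ := by group
    _ = (e 0)⁻¹ * ((a * a) * e 0) * (e 0)⁻¹ := by rw [hzeta_e0]
    _ = (e 0)⁻¹ * (a * a) := by group

lemma hbb : b * b = a * a := by
  have h1 : b * b = (e 0)⁻¹ * ((a * a) * e 0) := by unfold a b; group
  rw [h1, hzeta_e0]; group

lemma hba : b * a = a * a * (a * b) := by
  have rhs : a * a * (a * b) = e 2 * e 3 * e 2 * ((e 0)⁻¹ * (e 0)⁻¹ * (e 0)⁻¹) := by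
    rw [hab, haa]
    unfold c
    calc e 3 * e 1 * ((e 0)⁻¹ * (e 0)⁻¹) * (e 3 * (e 0)⁻¹)
        = e 3 * e 1 * ((e 0)⁻¹ * ((e 0)⁻¹ * e 3 * e 0) * e 0)
            * ((e 0)⁻¹ * (e 0)⁻¹ * (e 0)⁻¹) := by group
      _ = e 3 * e 1 * ((e 0)⁻¹ * e 1 * e 0) * ((e 0)⁻¹ * (e 0)⁻¹ * (e 0)⁻¹) := by rw [i3]
      _ = e 3 * e 1 * e 2 * ((e 0)⁻¹ * (e 0)⁻¹ * (e 0)⁻¹) := by rw [i1]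
      _ = (e 3 * e 1) * e 2 * ((e 0)⁻¹ * (e 0)⁻¹ * (e 0)⁻¹) := by group
      _ = (e 2 * e 3) * e 2 * ((e 0)⁻¹ * (e 0)⁻¹ * (e 0)⁻¹) := by rw [r31]
      _ = e 2 * e 3 * e 2 * ((e 0)⁻¹ * (e 0)⁻¹ * (e 0)⁻¹) := by group
  rw [rhs]
  unfold b a
  calc (e 0)⁻¹ * e 1 * (e 1 * (e 0)⁻¹)
      = ((e 0)⁻¹ * e 1 * e 0) * ((e 0)⁻¹ * e 1 * e 0) * ((e 0)⁻¹ * (e 0)⁻¹) := by group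
    _ = e 2 * e 2 * ((e 0)⁻¹ * (e 0)⁻¹) := by rw [i1]
    _ = e 2 * (e 2 * e 0) * ((e 0)⁻¹ * (e 0)⁻¹ * (e 0)⁻¹) := by group
    _ = e 2 * (e 3 * e 2) * ((e 0)⁻¹ * (e 0)⁻¹ * (e 0)⁻¹) := by rw [r20]
    _ = e 2 * e 3 * e 2 * ((e 0)⁻¹ * (e 0)⁻¹ * (e 0)⁻¹) := by group

lemma hzeta_central : ∀ g : P, (a * a) * g = g * (a * a) := by
  have hgen : ∀ j : Fin 4, (PresentedGroup.of j : P) ∈ Subgroup.centralizer {a * a} := by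
    intro j
    rw [Subgroup.mem_centralizer_iff]
    intro h hh
    rw [Set.mem_singleton_iff] at hh
    subst hh
    fin_cases j
    · show (a * a) * e 0 = e 0 * (a * a)
      exact hzeta_e0
    · show (a * a) * e 1 = e 1 * (a * a)
      have h1 : e 1 = a * e 0 := by unfold a; group
      rw [h1]
      calc (a * a) * (a * e 0) = a * ((a * a) * e 0) := by group
        _ = a * (e 0 * (a * a)) := by rw [hzeta_e0]
        _ = (a * e 0) * (a * a) := by group
    · show (a * a) * e 2 = e 2 * (a * a)
      have h1 : e 2 = (e 0)⁻¹ * e 1 * e 0 := i1.symm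
      have h2 : e 1 = a * e 0 := by unfold a; group
      rw [h1, h2]
      calc (a * a) * ((e 0)⁻¹ * (a * e 0) * e 0)
          = ((a * a) * (e 0)⁻¹) * a * e 0 * e 0 := by group
        _ = ((e 0)⁻¹ * (a * a)) * a * e 0 * e 0 := by rw [hzeta_e0']
        _ = (e 0)⁻¹ * a * ((a * a) * e 0) * e 0 := by group
        _ = (e 0)⁻¹ * a * (e 0 * (a * a)) * e 0 := by rw [hzeta_e0]
        _ = (e 0)⁻¹ * (a * e 0) * ((a * a) * e 0) := by group
        _ = (e 0)⁻¹ * (a * e 0) * (e 0 * (a * a)) := by rw [hzeta_e0]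
        _ = ((e 0)⁻¹ * (a * e 0) * e 0) * (a * a) := by group
    · show (a * a) * e 3 = e 3 * (a * a)
      have h1 : e 3 = e 0 * e 1 * (e 0)⁻¹ := by rw [r01]; group
      have h2 : e 1 = a * e 0 := by unfold a; group
      rw [h1, h2]
      calc (a * a) * (e 0 * (a * e 0) * (e 0)⁻¹)
          = ((a * a) * e 0) * a * e 0 * (e 0)⁻¹ := by group
        _ = (e 0 * (a * a)) * a * e 0 * (e 0)⁻¹ := by rw [hzeta_e0]
        _ = e 0 * a * ((a * a) * e 0) * (e 0)⁻¹ := by group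
        _ = e 0 * a * (e 0 * (a * a)) * (e 0)⁻¹ := by rw [hzeta_e0]
        _ = e 0 * (a * e 0) * ((a * a) * (e 0)⁻¹) := by group
        _ = e 0 * (a * e 0) * ((e 0)⁻¹ * (a * a)) := by rw [hzeta_e0']
        _ = (e 0 * (a * e 0) * (e 0)⁻¹) * (a * a) := by group
  intro g
  have hg := PresentedGroup.generated_by TRels (Subgroup.centralizer {a * a}) hgen g
  exact Subgroup.mem_centralizer_iff.mp hg (a * a) rfl

lemma he1 : e 1 = a * e 0 := by unfold a; group
lemma he0b : e 0 * b = a * e 0 := by unfold a b; group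

lemma zeta_central_T (t : Multiplicative ℤ × P) :
    ((1, a * a) : Multiplicative ℤ × P) * t = t * ((1, a * a) : Multiplicative ℤ × P) := by
  obtain ⟨m, g⟩ := t
  rw [Prod.mk_mul_mk, Prod.mk_mul_mk, one_mul, mul_one, hzeta_central g]

lemma z_central_T (t : Multiplicative ℤ × P) :
    ((Multiplicative.ofAdd (1 : ℤ), 1) : Multiplicative ℤ × P) * t
      = t * ((Multiplicative.ofAdd (1 : ℤ), 1) : Multiplicative ℤ × P) := by
  obtain ⟨m, g⟩ := t
  rw [Prod.mk_mul_mk, Prod.mk_mul_mk, one_mul, mul_one, mul_comm]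

section Rep

variable {K : Type} [Field K] {G : Type} [Group G]
  {V : Type} [AddCommGroup V] [Module K V]
  (L : Type) [Field L] [Algebra K L]
  (ρ : Representation K G V)

lemma invariant_bot_or_top
    (hS : IsSimpleModule (MonoidAlgebra L G) (repBaseChange L ρ).asModule)
    (U : Submodule L (L ⊗[K] V))
    (hU : ∀ (g : G) (u : L ⊗[K] V), u ∈ U → (repBaseChange L ρ) g u ∈ U) :
    U = ⊥ ∨ U = ⊤ := by
  haveI := hS
  set ρL := repBaseChange L ρ with hρL
  have smul_mem : ∀ (r : MonoidAlgebra L G) (x : L ⊗[K] V), x ∈ U → ρL.asAlgebraHom r x ∈ U := by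
    intro r
    induction r using MonoidAlgebra.induction_on with
    | of g =>
      intro x hx
      rw [Representation.asAlgebraHom_of]
      exact hU g x hx
    | add f g hf hg =>
      intro x hx
      rw [map_add, LinearMap.add_apply]
      exact U.add_mem (hf x hx) (hg x hx)
    | smul r f hf =>
      intro x hx
      rw [map_smul, LinearMap.smul_apply]
      exact U.smul_mem r (hf x hx)
  let U' : Submodule (MonoidAlgebra L G) ρL.asModule :=
    { carrier := show Set (ρL.asModule) from (U : Set (L ⊗[K] V))
      add_mem' := fun h1 h2 => U.add_mem h1 h2
      zero_mem' := U.zero_mem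
      smul_mem' := fun r {x} hx => smul_mem r x hx }
  haveI := hS.toIsSimpleOrder
  rcases eq_bot_or_eq_top U' with h | h
  · left
    rw [Submodule.eq_bot_iff]
    intro x hx
    have hx' : x ∈ U' := hx
    rw [h] at hx'
    exact hx'
  · right
    rw [Submodule.eq_top_iff']
    intro x
    have hx' : (show ρL.asModule from x) ∈ U' := by rw [h]; exact Submodule.mem_top
    exact hx'

lemma central_scalar [IsAlgClosed L] [FiniteDimensional K V]
    [Nontrivial (L ⊗[K] V)]
    (hS : IsSimpleModule (MonoidAlgebra L G) (repBaseChange L ρ).asModule)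
    (T₀ : Type) [Group T₀] (f : T₀ →* G) (hf : Function.Surjective f)
    (t0 : T₀) (hc : ∀ t, t0 * t = t * t0) :
    ∃ μ : L, (repBaseChange L ρ) (f t0) = μ • (1 : Module.End L (L ⊗[K] V)) := by
  set ρL := repBaseChange L ρ with hρL
  obtain ⟨μ, hμ⟩ := Module.End.exists_eigenvalue (ρL (f t0))
  obtain ⟨v, hv⟩ := hμ.exists_hasEigenvector
  refine ⟨μ, ?_⟩
  set D := ρL (f t0) - μ • (1 : Module.End L (L ⊗[K] V)) with hD
  have hker : ∀ (g : G) (u : L ⊗[K] V), u ∈ LinearMap.ker D → ρL g u ∈ LinearMap.ker D := by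
    intro g u hu
    have h1 : ρL (f t0) * ρL g = ρL g * ρL (f t0) := by
      obtain ⟨t, rfl⟩ := hf g
      rw [← map_mul, ← map_mul, ← map_mul, ← map_mul, hc t]
    have hcomm : D * ρL g = ρL g * D := by
      rw [hD]
      refine LinearMap.ext fun x => ?_
      have h1x := congrArg (fun X => X x) h1
      simp only [Module.End.mul_apply, LinearMap.sub_apply, LinearMap.smul_apply,
        Module.End.one_apply, map_sub, map_smul] at h1x ⊢
      rw [h1x]
    rw [LinearMap.mem_ker] at hu ⊢
    calc D (ρL g u) = (D * ρL g) u := rfl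
      _ = (ρL g * D) u := by rw [hcomm]
      _ = ρL g (D u) := rfl
      _ = 0 := by rw [hu, map_zero]
  rcases invariant_bot_or_top L ρ hS (LinearMap.ker D) hker with h | h
  · exfalso
    have hvker : v ∈ LinearMap.ker D := by
      rw [LinearMap.mem_ker, hD, LinearMap.sub_apply, LinearMap.smul_apply, Module.End.one_apply,
        hv.apply_eq_smul, sub_self]
    rw [h, Submodule.mem_bot] at hvker
    exact hv.right hvker
  · have hD0 : D = 0 := LinearMap.ker_eq_top.mp h
    exact sub_eq_zero.mp hD0

lemma main_aux [IsAlgClosed L] [FiniteDimensional K V]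
    (f : TGroup →* G) (hf : Function.Surjective f)
    (hS : IsSimpleModule (MonoidAlgebra L G) (repBaseChange L ρ).asModule) :
    Module.finrank L (L ⊗[K] V) ≤ 4 := by
  classical
  haveI : FiniteDimensional L (L ⊗[K] V) := Module.Finite.base_change K L V
  haveI : Nontrivial (L ⊗[K] V) :=
    IsSimpleModule.nontrivial (MonoidAlgebra L G) ((repBaseChange L ρ).asModule)
  set Ψ : TGroup →* Module.End L (L ⊗[K] V) :=
    ((repBaseChange L ρ : G →* Module.End L (L ⊗[K] V)).comp f) with hΨdef
  obtain ⟨μ, hμ0⟩ := central_scalar L ρ hS TGroup f hf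
    ((1, a * a) : TGroup) (fun t => zeta_central_T t)
  obtain ⟨ν, hν0⟩ := central_scalar L ρ hS TGroup f hf
    ((Multiplicative.ofAdd (1 : ℤ), 1) : TGroup) (fun t => z_central_T t)
  have hμ : Ψ ((1, a * a) : TGroup) = μ • 1 := hμ0
  have hν : Ψ ((Multiplicative.ofAdd (1 : ℤ), 1) : TGroup) = ν • 1 := hν0
  set S : Module.End L (L ⊗[K] V) := Ψ (1, e 0) with hSdef
  set A : Module.End L (L ⊗[K] V) := Ψ (1, a) with hAdef
  set B : Module.End L (L ⊗[K] V) := Ψ (1, b) with hBdef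
  have hmulP : ∀ p q : P, Ψ (1, p) * Ψ (1, q) = Ψ (1, p * q) := by
    intro p q
    refine (map_mul Ψ (1, p) (1, q)).symm.trans ?_
    exact congrArg Ψ (by
      rfl)
  have hA2 : A * A = μ • 1 := by
    rw [hAdef, hmulP]
    exact hμ
  have hB2 : B * B = μ • 1 := by
    rw [hBdef, hmulP, hbb]
    exact hμ
  have hBA : B * A = A * (A * (A * B)) := by
    rw [hBdef, hAdef, hmulP, hmulP, hmulP, hmulP, hba, mul_assoc]
  have hSA : S * A = (A * B) * S := by
    rw [hSdef, hAdef, hBdef, hmulP, hmulP, hmulP, hca, ← hab]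
  have hSB : S * B = A * S := by
    rw [hSdef, hAdef, hBdef, hmulP, hmulP, he0b]
  obtain ⟨s, hs⟩ := Module.End.exists_eigenvalue S
  obtain ⟨v, hv⟩ := hs.exists_hasEigenvector
  have hSv : S v = s • v := hv.apply_eq_smul
  set w : Fin 4 → L ⊗[K] V := ![v, A v, B v, A (B v)] with hwdef
  set U : Submodule L (L ⊗[K] V) := Submodule.span L (Set.range w) with hUdef
  have m0 : v ∈ U := Submodule.subset_span ⟨0, rfl⟩
  have m1 : A v ∈ U := Submodule.subset_span ⟨1, rfl⟩
  have m2 : B v ∈ U := Submodule.subset_span ⟨2, rfl⟩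
  have m3 : A (B v) ∈ U := Submodule.subset_span ⟨3, rfl⟩
  have happ : ∀ (X Y : Module.End L (L ⊗[K] V)) (u : L ⊗[K] V), (X * Y) u = X (Y u) := by
    intro X Y u; rfl
  have hAAv : A (A v) = μ • v := by
    rw [← happ, hA2, LinearMap.smul_apply, Module.End.one_apply]
  have hAABv : A (A (B v)) = μ • B v := by
    rw [← happ, hA2, LinearMap.smul_apply, Module.End.one_apply]
  have hBBv : B (B v) = μ • v := by
    rw [← happ, hB2, LinearMap.smul_apply, Module.End.one_apply]
  have hAAAv : A (A (A v)) = μ • A v := by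
    rw [hAAv, map_smul]
  have hBAv : B (A v) = μ • A (B v) := by
    have h := congrArg (fun X => X v) hBA
    simp only [happ] at h
    rw [h, hAABv, map_smul]
  have hBABv : B (A (B v)) = μ • (μ • A v) := by
    have h := congrArg (fun X => X (B v)) hBA
    simp only [happ] at h
    rw [h, hBBv, map_smul, map_smul, map_smul, hAAAv, smul_comm]
  have hinvA : Submodule.map A U ≤ U := by
    rw [hUdef, Submodule.map_span_le]
    rintro m ⟨i, rfl⟩
    fin_cases i
    · exact m1
    · show A (A v) ∈ U
      rw [hAAv]; exact U.smul_mem μ m0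
    · exact m3
    · show A (A (B v)) ∈ U
      rw [hAABv]; exact U.smul_mem μ m2
  have hinvB : Submodule.map B U ≤ U := by
    rw [hUdef, Submodule.map_span_le]
    rintro m ⟨i, rfl⟩
    fin_cases i
    · exact m2
    · show B (A v) ∈ U
      rw [hBAv]; exact U.smul_mem μ m3
    · show B (B v) ∈ U
      rw [hBBv]; exact U.smul_mem μ m0
    · show B (A (B v)) ∈ U
      rw [hBABv]; exact U.smul_mem μ (U.smul_mem μ m1)
  have hinvS : Submodule.map S U ≤ U := by
    rw [hUdef, Submodule.map_span_le]
    rintro m ⟨i, rfl⟩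
    fin_cases i
    · show S v ∈ U
      rw [hSv]; exact U.smul_mem s m0
    · show S (A v) ∈ U
      have h := congrArg (fun X => X v) hSA
      simp only [happ] at h
      rw [h, hSv, map_smul, map_smul]
      exact U.smul_mem s m3
    · show S (B v) ∈ U
      have h := congrArg (fun X => X v) hSB
      simp only [happ] at h
      rw [h, hSv, map_smul]
      exact U.smul_mem s m1
    · show S (A (B v)) ∈ U
      have h := congrArg (fun X => X (B v)) hSA
      simp only [happ] at h
      have h2 := congrArg (fun X => X v) hSB
      simp only [happ] at h2
      rw [h, h2, hSv, map_smul, map_smul, map_smul, hBAv, map_smul, hAABv]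
      exact U.smul_mem s (U.smul_mem μ (U.smul_mem μ m2))
  have hinvZ : Submodule.map (Ψ (Multiplicative.ofAdd (1 : ℤ), 1)) U ≤ U := by
    rintro x ⟨u, hu, rfl⟩
    rw [hν, LinearMap.smul_apply, Module.End.one_apply]
    exact U.smul_mem ν hu
  set Hs : Subgroup TGroup :=
    { carrier := {t : TGroup | Submodule.map (Ψ t) U ≤ U}
      one_mem' := by
        rw [Set.mem_setOf_eq, map_one]
        rintro x ⟨u, hu, rfl⟩
        exact hu
      mul_mem' := by
        intro t1 t2 h1 h2
        rw [Set.mem_setOf_eq] at h1 h2 ⊢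
        rw [map_mul, Module.End.mul_eq_comp, Submodule.map_comp]
        exact le_trans (Submodule.map_mono h2) h1
      inv_mem' := by
        intro t h
        rw [Set.mem_setOf_eq] at h ⊢
        have hinj : Function.Injective (Ψ t) := by
          intro x y hxy
          have h2 := congrArg (Ψ t⁻¹) hxy
          rwa [← Module.End.mul_apply, ← Module.End.mul_apply, ← map_mul, inv_mul_cancel,
            map_one, Module.End.one_apply, Module.End.one_apply] at h2
        have hfr : Module.finrank L U ≤ Module.finrank L (Submodule.map (Ψ t) U) :=
          le_of_eq (Submodule.equivMapOfInjective (Ψ t) hinj U).finrank_eq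
        have heq : Submodule.map (Ψ t) U = U := Submodule.eq_of_le_of_finrank_le h hfr
        have hstep : Submodule.map (Ψ t⁻¹) U = Submodule.map (Ψ t⁻¹) (Submodule.map (Ψ t) U) := by
          rw [heq]
        rw [hstep, ← Submodule.map_comp, ← Module.End.mul_eq_comp, ← map_mul, inv_mul_cancel,
          map_one]
        rintro x ⟨u, hu, rfl⟩
        exact hu }
    with hHsdef
  have hx1 : ((1, e 0) : TGroup) ∈ Hs := hinvS
  have hxa : ((1, a) : TGroup) ∈ Hs := hinvA
  have hxb : ((1, b) : TGroup) ∈ Hs := hinvB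
  have hz : ((Multiplicative.ofAdd (1 : ℤ), 1) : TGroup) ∈ Hs := hinvZ
  have hinrm : ∀ p q : P, ((1, p * q) : TGroup) = ((1, p) : TGroup) * ((1, q) : TGroup) :=
    fun p q => (map_mul (MonoidHom.inr (Multiplicative ℤ) P) p q)
  have hinrinv : ∀ p : P, ((1, p⁻¹) : TGroup) = (((1, p) : TGroup))⁻¹ :=
    fun p => (map_inv (MonoidHom.inr (Multiplicative ℤ) P) p)
  have hx2 : ((1, e 1) : TGroup) ∈ Hs := by
    rw [he1, hinrm]
    exact Hs.mul_mem hxa hx1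
  have hPmem : ∀ g : P, ((1, g) : TGroup) ∈ Hs := by
    intro g
    refine PresentedGroup.generated_by TRels
      (Hs.comap (MonoidHom.inr (Multiplicative ℤ) P)) ?_ g
    intro j
    show ((1, PresentedGroup.of j) : TGroup) ∈ Hs
    fin_cases j
    · exact hx1
    · exact hx2
    · show ((1, e 2) : TGroup) ∈ Hs
      rw [← i1, hinrm, hinrm, hinrinv]
      exact Hs.mul_mem (Hs.mul_mem (Hs.inv_mem hx1) hx2) hx1
    · show ((1, e 3) : TGroup) ∈ Hs
      have he3 : e 3 = e 0 * e 1 * (e 0)⁻¹ := by rw [r01]; group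
      rw [he3, hinrm, hinrm, hinrinv]
      exact Hs.mul_mem (Hs.mul_mem hx1 hx2) (Hs.inv_mem hx1)
  have hgenHs : ∀ t : TGroup, t ∈ Hs := by
    rintro ⟨m, g⟩
    have hm : ((m, (1 : P)) : TGroup) ∈ Hs := by
      have hmz : ((m, (1 : P)) : TGroup)
          = ((Multiplicative.ofAdd (1 : ℤ), (1 : P)) : TGroup) ^ (Multiplicative.toAdd m) := by
        have h1 : (MonoidHom.inl (Multiplicative ℤ) P) m
            = (MonoidHom.inl (Multiplicative ℤ) P)
                ((Multiplicative.ofAdd (1 : ℤ)) ^ (Multiplicative.toAdd m)) := by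
          congr 1
          rw [← ofAdd_zsmul, smul_eq_mul, mul_one]
          rfl
        rw [map_zpow] at h1
        exact h1
      rw [hmz]
      exact Hs.zpow_mem hz _
    have hsplit : ((m, g) : TGroup) = ((m, (1 : P)) : TGroup) * ((1, g) : TGroup) := by
      rw [Prod.mk_mul_mk, mul_one, one_mul]
    rw [hsplit]
    exact Hs.mul_mem hm (hPmem g)
  have hUinv : ∀ (g : G) (u : L ⊗[K] V), u ∈ U → (repBaseChange L ρ) g u ∈ U := by
    intro g u hu
    obtain ⟨t, rfl⟩ := hf g
    exact hgenHs t (Submodule.mem_map_of_mem hu)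
  rcases invariant_bot_or_top L ρ hS U hUinv with h | h
  · exfalso
    rw [h, Submodule.mem_bot] at m0
    exact hv.right m0
  · have h4 := finrank_le_of_span_eq_top (R := L) (v := w) h
    simpa using h4

end Rep

end Stmt7Aux

theorem stmt7 (K : Type) [Field K] (G : Type) [Group G]
    (f : TGroup →* G) (hf : Function.Surjective f)
    (V : Type) [AddCommGroup V] [Module K V] [FiniteDimensional K V]
    (ρ : Representation K G V) (hρ : IsAbsolutelySimpleRep K G ρ) :
    Module.finrank K V ≤ 4 := by
  have hS := hρ (AlgebraicClosure K)
  have h := Stmt7Aux.main_aux (AlgebraicClosure K) ρ f hf hS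
  rwa [Module.finrank_baseChange] at h
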